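/- arXiv:1407.2955 — 3 statements merged into one kernel-verified Lean document; each statement's English description precedes it below -/
import Mathlib

section
/- Let A = (id_s | A₁) and V be as above, S ⊆ ℝⁿ a subspace. If for every κ̂ ∈ ℝ^{r-s}_{>0} the map g_{κ̂} is S-injective, then for every κ ∈ ℝʳ_{>0} the map f_κ(x) = A(κ ∘ x^V) does not have multiple S-zeros. -/
/-- The vector of generalised monomials `x^V` given by the columns of `V`. -/
noncomputable def monos {n : ℕ} {r : Type*} (V : Matrix (Fin n) r ℝ) (x : Fin n → ℝ) :
    r → ℝ :=
  fun j => ∏ i, x i ^ V i j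

/-- The map `g_κ̂` obtained from `A = (id_s | A₁)` by eliminating `κ₁,…,κ_s`. -/
noncomputable def gmap {s t n : ℕ} (A₁ : Matrix (Fin s) (Fin t) ℝ)
    (V : Matrix (Fin n) (Fin s ⊕ Fin t) ℝ) (κh : Fin t → ℝ) (x : Fin n → ℝ) :
    Fin s → ℝ :=
  fun i => - ((∏ l, x l ^ (-(V l (Sum.inl i)))) *
      ∑ j, A₁ i j * (κh j * monos V x (Sum.inr j)))

lemma key_zero {s t n : ℕ} (A₁ : Matrix (Fin s) (Fin t) ℝ)
    (V : Matrix (Fin n) (Fin s ⊕ Fin t) ℝ) (κ : Fin s ⊕ Fin t → ℝ)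
    (x : Fin n → ℝ) (hx : ∀ i, 0 < x i)
    (h : (Matrix.fromCols (1 : Matrix (Fin s) (Fin s) ℝ) A₁).mulVec
        (fun j => κ j * monos V x j) = 0) :
    ∀ i, κ (Sum.inl i) = gmap A₁ V (fun j => κ (Sum.inr j)) x i := by
  intro i
  have hi := congrFun h i
  have hM : 0 < monos V x (Sum.inl i) := by
    apply Finset.prod_pos
    intro l _
    exact Real.rpow_pos_of_pos (hx l) _
  have hinv : (∏ l, x l ^ (-(V l (Sum.inl i)))) = (monos V x (Sum.inl i))⁻¹ := by
    rw [monos, ← Finset.prod_inv_distrib]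
    exact Finset.prod_congr rfl fun l _ => Real.rpow_neg (hx l).le _
  simp only [Matrix.mulVec, dotProduct, Fintype.sum_sum_type,
    Matrix.fromCols, Matrix.of_apply, Sum.elim_inl, Sum.elim_inr,
    Pi.zero_apply, Matrix.one_apply] at hi
  simp only [ite_mul, one_mul, zero_mul, Finset.sum_ite_eq, Finset.mem_univ, if_true] at hi
  rw [gmap, hinv]
  have hM' : monos V x (Sum.inl i) ≠ 0 := ne_of_gt hM
  field_simp
  have e : ∑ j, A₁ i j * κ (Sum.inr j) * monos V x (Sum.inr j) = ∑ j, A₁ i j * (κ (Sum.inr j) * monos V x (Sum.inr j)) :=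
    Finset.sum_congr rfl fun _ _ => mul_assoc _ _ _
  linarith [hi, e]

theorem stmt_7 {s t n : ℕ} (A₁ : Matrix (Fin s) (Fin t) ℝ)
    (V : Matrix (Fin n) (Fin s ⊕ Fin t) ℝ) (S : Submodule ℝ (Fin n → ℝ))
    (hg : ∀ κh : Fin t → ℝ, (∀ j, 0 < κh j) →
      ∀ x y : Fin n → ℝ, (∀ i, 0 < x i) → (∀ i, 0 < y i) → x ≠ y → x - y ∈ S →
        gmap A₁ V κh x ≠ gmap A₁ V κh y) :
    ∀ κ : Fin s ⊕ Fin t → ℝ, (∀ j, 0 < κ j) →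
      ¬ ∃ x y : Fin n → ℝ, (∀ i, 0 < x i) ∧ (∀ i, 0 < y i) ∧ x ≠ y ∧ x - y ∈ S ∧
        (Matrix.fromCols (1 : Matrix (Fin s) (Fin s) ℝ) A₁).mulVec
          (fun j => κ j * monos V x j) = 0 ∧
        (Matrix.fromCols (1 : Matrix (Fin s) (Fin s) ℝ) A₁).mulVec
          (fun j => κ j * monos V y j) = 0 := by
  intro κ hκ
  rintro ⟨x, y, hx, hy, hxy, hS, hfx, hfy⟩
  have hgx := key_zero A₁ V κ x hx hfx
  have hgy := key_zero A₁ V κ y hy hfy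
  exact hg (fun j => κ (Sum.inr j)) (fun j => hκ _) x y hx hy hxy hS
    (funext fun i => (hgx i).symm.trans (hgy i))
end

section
/- Let A = (id_s | A₁) ∈ ℝ^{s×r} and V ∈ ℝ^{n×r}, and S ⊆ ℝⁿ a subspace. Suppose there exist κ̂ ∈ ℝ^{r-s}_{>0} and distinct x, y ∈ ℝⁿ_{>0} with x - y ∈ S such that g_{κ̂}(x) = g_{κ̂}(y) and all coordinates of g_{κ̂}(x) are strictly positive. Then there exists κ ∈ ℝʳ_{>0} such that f_κ has multiple S-zeros, i.e., f_κ(x) = f_κ(y) = 0. -/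
lemma key {s t n : ℕ} (A₁ : Matrix (Fin s) (Fin t) ℝ)
    (V : Matrix (Fin n) (Fin s ⊕ Fin t) ℝ) (κh : Fin t → ℝ)
    (z : Fin n → ℝ) (hz : ∀ i, 0 < z i) (c : Fin s → ℝ)
    (hc : c = gmap A₁ V κh z) :
    (Matrix.fromCols (1 : Matrix (Fin s) (Fin s) ℝ) A₁).mulVec
        (fun j => Sum.elim c κh j * monos V z j) = 0 := by
  funext i
  have hprod : (∏ l, z l ^ (-(V l (Sum.inl i)))) * monos V z (Sum.inl i) = 1 := by
    rw [monos, ← Finset.prod_mul_distrib]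
    rw [Finset.prod_eq_one]
    intro l _
    rw [← Real.rpow_add (hz l)]
    simp
  simp only [Matrix.mulVec, dotProduct, Matrix.fromCols, Fintype.sum_sum_type,
    Matrix.of_apply, Sum.elim_inl, Sum.elim_inr, Pi.zero_apply]
  rw [Finset.sum_eq_single i (by intro b _ hb; simp [Matrix.one_apply_ne' hb])
    (by simp)]
  rw [hc]
  simp only [Matrix.one_apply_eq, one_mul, gmap]
  rw [neg_mul, mul_comm, ← mul_assoc]
  rw [mul_comm (monos V z (Sum.inl i)), hprod, one_mul]
  rw [neg_add_eq_zero]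

theorem stmt_8 {s t n : ℕ} (A₁ : Matrix (Fin s) (Fin t) ℝ)
    (V : Matrix (Fin n) (Fin s ⊕ Fin t) ℝ) (S : Submodule ℝ (Fin n → ℝ))
    (κh : Fin t → ℝ) (hκh : ∀ j, 0 < κh j)
    (x y : Fin n → ℝ) (hx : ∀ i, 0 < x i) (hy : ∀ i, 0 < y i) (hxy : x ≠ y)
    (hS : x - y ∈ S) (hgeq : gmap A₁ V κh x = gmap A₁ V κh y)
    (hpos : ∀ i, 0 < gmap A₁ V κh x i) :
    ∃ κ : Fin s ⊕ Fin t → ℝ, (∀ j, 0 < κ j) ∧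
      (Matrix.fromCols (1 : Matrix (Fin s) (Fin s) ℝ) A₁).mulVec
        (fun j => κ j * monos V x j) = 0 ∧
      (Matrix.fromCols (1 : Matrix (Fin s) (Fin s) ℝ) A₁).mulVec
        (fun j => κ j * monos V y j) = 0 := by
  refine ⟨Sum.elim (gmap A₁ V κh x) κh, ?_, key A₁ V κh x hx _ rfl,
    key A₁ V κh y hy _ hgeq⟩
  rintro (i | j)
  · exact hpos i
  · exact hκh j
end

section
/- Let A' = [[1,0,0],[0,1,1]] and V' the 4×3 matrix with columns (-1,0,0,1)ᵗ, (1,-1,-1,1)ᵗ, (0,0,-1,1)ᵗ, and S = span{(1,-1,0,0),(0,0,1,-1)} ⊆ ℝ⁴. Then for every η ∈ ℝ³_{>0}, the map x ↦ A'(η ∘ x^{V'}) = (η₁x₁⁻¹x₄, η₂x₁x₂⁻¹x₃⁻¹x₄ + η₃x₃⁻¹x₄) is S-injective: for all distinct x, y ∈ ℝ⁴_{>0} with x - y ∈ S, the images differ. -/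
theorem stmt_14 (η : Fin 3 → ℝ) (hη : ∀ j, 0 < η j) :
    ∀ x y : Fin 4 → ℝ, (∀ i, 0 < x i) → (∀ i, 0 < y i) → x ≠ y →
      x - y ∈ Submodule.span ℝ ({![(1:ℝ), -1, 0, 0], ![0, 0, 1, -1]} :
        Set (Fin 4 → ℝ)) →
      ¬ (η 0 * (x 0)⁻¹ * x 3 = η 0 * (y 0)⁻¹ * y 3 ∧
         η 1 * x 0 * (x 1)⁻¹ * (x 2)⁻¹ * x 3 + η 2 * (x 2)⁻¹ * x 3 =
           η 1 * y 0 * (y 1)⁻¹ * (y 2)⁻¹ * y 3 + η 2 * (y 2)⁻¹ * y 3) := by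
  intro x y hx hy hxy hmem
  rintro ⟨h1, h2⟩
  rw [Submodule.mem_span_pair] at hmem
  obtain ⟨a, b, hab⟩ := hmem
  have e0 := congr_fun hab 0
  have e1 := congr_fun hab 1
  have e2 := congr_fun hab 2
  have e3 := congr_fun hab 3
  simp [Pi.add_apply, Pi.smul_apply, Pi.sub_apply] at e0 e1 e2 e3
  have he1 := hη 1; have he2 := hη 2
  have hx0 := hx 0; have hx1 := hx 1; have hx2 := hx 2; have hx3 := hx 3
  have px1 : (0:ℝ) < (x 1)⁻¹ := inv_pos.mpr (hx 1)
  have px2 : (0:ℝ) < (x 2)⁻¹ := inv_pos.mpr (hx 2)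
  have py1 : (0:ℝ) < (y 1)⁻¹ := inv_pos.mpr (hy 1)
  have py2 : (0:ℝ) < (y 2)⁻¹ := inv_pos.mpr (hy 2)
  have hy0 := hy 0; have hy1 := hy 1; have hy2 := hy 2; have hy3 := hy 3
  have key : (x 0)⁻¹ * x 3 = (y 0)⁻¹ * y 3 := by
    apply mul_left_cancel₀ (ne_of_gt (hη 0))
    linear_combination h1
  have h1' : x 3 * y 0 = y 3 * x 0 := by
    field_simp at key
    linarith [key]
  have hrel : b * y 0 + a * y 3 = 0 := by
    linear_combination -h1' + y 3 * e0 - y 0 * e3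
  rcases lt_trichotomy a 0 with ha | ha | ha
  · have hb : 0 < b := by nlinarith [mul_pos (neg_pos.mpr ha) hy3]
    have ineq : η 1 * x 0 * (x 1)⁻¹ * (x 2)⁻¹ * x 3 + η 2 * (x 2)⁻¹ * x 3 <
        η 1 * y 0 * (y 1)⁻¹ * (y 2)⁻¹ * y 3 + η 2 * (y 2)⁻¹ * y 3 := by
      have i1 : (x 1)⁻¹ < (y 1)⁻¹ := by
        apply inv_strictAnti₀ hy1; linarith
      have i2 : (x 2)⁻¹ < (y 2)⁻¹ := by
        apply inv_strictAnti₀ hy2; linarith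
      have hx0y : x 0 < y 0 := by linarith
      have hx3y : x 3 < y 3 := by linarith
      gcongr <;> first | assumption | (apply le_of_lt; repeat' apply mul_pos <;> assumption)
    exact ne_of_lt ineq h2
  · subst ha
    have hb : b = 0 := by
      have : b * y 0 = 0 := by linarith
      rcases mul_eq_zero.mp this with h | h
      · exact h
      · linarith
    subst hb
    apply hxy
    have : x - y = 0 := by rw [← hab]; simp
    ext i
    have := congr_fun this i
    simpa [sub_eq_zero] using this
  · have hb : b < 0 := by nlinarith [mul_pos ha hy3]
    have ineq : η 1 * y 0 * (y 1)⁻¹ * (y 2)⁻¹ * y 3 + η 2 * (y 2)⁻¹ * y 3 <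
        η 1 * x 0 * (x 1)⁻¹ * (x 2)⁻¹ * x 3 + η 2 * (x 2)⁻¹ * x 3 := by
      have i1 : (y 1)⁻¹ < (x 1)⁻¹ := by
        apply inv_strictAnti₀ hx1; linarith
      have i2 : (y 2)⁻¹ < (x 2)⁻¹ := by
        apply inv_strictAnti₀ hx2; linarith
      have hx0y : y 0 < x 0 := by linarith
      have hx3y : y 3 < x 3 := by linarith
      gcongr <;> first | assumption | (apply le_of_lt; repeat' apply mul_pos <;> assumption)
    exact ne_of_gt ineq h2
end
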